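/- Let f : ℝ → ℝ be continuously differentiable and strictly concave on [0,∞) with f(0) = 0, let r > 0 and 0 < T̄ < T satisfy Assumption 1: f'(0)·T̄ > r·T. Then there exists ε > 0 such that for every x₀ ∈ (0, ε), any positive continuous solution x : [0,T] → (0,∞) of the closed-reactor dynamics x' = f(x) − r·x on (0,T̄) and x' = −r·x on (T̄,T) with x(0) = x₀ satisfies x(T) > x₀. -/

import Mathlib

open Set Real

/-- Exponential lower bound: if `x' ≥ k·x` on `(a,b)` then `x b ≥ x a · e^{k(b-a)}`. -/
lemma exp_grow {x d : ℝ → ℝ} {k a b : ℝ} (hab : a ≤ b)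
    (hc : ContinuousOn x (Set.Icc a b))
    (hd : ∀ t ∈ Set.Ioo a b, HasDerivAt x (d t) t)
    (hk : ∀ t ∈ Set.Ioo a b, k * x t ≤ d t) :
    x a * Real.exp (k * (b - a)) ≤ x b := by
  set y : ℝ → ℝ := fun t => x t * Real.exp (-k * t) with hy
  have hyd : ∀ t ∈ Set.Ioo a b,
      HasDerivAt y (d t * Real.exp (-k * t) + x t * (Real.exp (-k * t) * -k)) t := by
    intro t ht
    have he : HasDerivAt (fun t => Real.exp (-k * t)) (Real.exp (-k * t) * -k) t := by
      simpa using (((hasDerivAt_id t).const_mul (-k)).exp)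
    exact (hd t ht).mul he
  have hmono : MonotoneOn y (Set.Icc a b) := by
    apply monotoneOn_of_deriv_nonneg (convex_Icc a b)
    · exact hc.mul (Real.continuous_exp.comp (continuous_const.mul continuous_id)).continuousOn
    · intro t ht
      rw [interior_Icc] at ht
      exact (hyd t ht).differentiableAt.differentiableWithinAt
    · intro t ht
      rw [interior_Icc] at ht
      rw [(hyd t ht).deriv]
      have h1 := hk t ht
      have h2 := Real.exp_pos (-k * t)
      nlinarith
  have h := hmono (Set.left_mem_Icc.2 hab) (Set.right_mem_Icc.2 hab) hab
  simp only [hy] at h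
  have h2 := mul_le_mul_of_nonneg_right h (Real.exp_pos (k * b)).le
  calc x a * Real.exp (k * (b - a)) = x a * Real.exp (-k * a) * Real.exp (k * b) := by
        rw [mul_assoc, ← Real.exp_add]; ring_nf
    _ ≤ x b * Real.exp (-k * b) * Real.exp (k * b) := h2
    _ = x b := by rw [mul_assoc, ← Real.exp_add]; simp

/-- Under Assumption 1 (`f'(0)·Tb > r·T`), small initial conditions grow over one day in
the closed reactor: there is `ε > 0` such that every positive solution of
`ẋ = f(x) − r x` on `(0,Tb)` and `ẋ = −r x` on `(Tb,T)` starting at `x₀ ∈ (0,ε)`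
satisfies `x(T) > x₀`. -/
theorem closed_reactor_growth_for_small_x0
    (f : ℝ → ℝ) (r Tb T : ℝ)
    (hdiff : ∀ y ∈ Set.Ici (0 : ℝ), DifferentiableAt ℝ f y)
    (hderiv_cont : ContinuousOn (deriv f) (Set.Ici (0 : ℝ)))
    (hconc : StrictAntiOn (deriv f) (Set.Ici (0 : ℝ)))
    (hf0 : f 0 = 0)
    (hr : 0 < r)
    (hTb : 0 < Tb) (hT : Tb < T)
    (hassum : r * T < deriv f 0 * Tb) :
    ∃ ε > 0, ∀ x₀ ∈ Set.Ioo (0 : ℝ) ε, ∀ x : ℝ → ℝ,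
      ContinuousOn x (Set.Icc 0 T) →
      (∀ t ∈ Set.Icc (0 : ℝ) T, 0 < x t) →
      (∀ t ∈ Set.Ioo (0 : ℝ) Tb, HasDerivAt x (f (x t) - r * x t) t) →
      (∀ t ∈ Set.Ioo Tb T, HasDerivAt x (-(r * x t)) t) →
      x 0 = x₀ →
      x₀ < x T := by
  -- choose the intermediate slope c
  set c : ℝ := (r * T / Tb + deriv f 0) / 2 with hc_def
  have hcT : r * T < c * Tb := by
    have : r * T / Tb < deriv f 0 := by
      rw [div_lt_iff₀ hTb]; exact hassum
    have h2 : r * T / Tb * Tb = r * T := by field_simp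
    nlinarith
  have hc0 : c < deriv f 0 := by
    have : r * T / Tb < deriv f 0 := by
      rw [div_lt_iff₀ hTb]; exact hassum
    rw [hc_def]; linarith
  have hrc : r < c := by
    have : r * Tb < c * Tb := lt_trans (by nlinarith) hcT
    exact lt_of_mul_lt_mul_right this hTb.le
  -- find δ > 0 with deriv f y > c on [0, δ]
  obtain ⟨δ₀, hδ₀, hδball⟩ : ∃ δ > 0, ∀ y ∈ Set.Ici (0:ℝ), |y| < δ → c < deriv f y := by
    have hcw : ContinuousWithinAt (deriv f) (Set.Ici (0:ℝ)) 0 :=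
      hderiv_cont 0 (Set.mem_Ici.2 le_rfl)
    have hev : ∀ᶠ y in nhdsWithin 0 (Set.Ici (0:ℝ)), c < deriv f y :=
      hcw.eventually (eventually_gt_nhds hc0)
    rw [Filter.eventually_iff, Metric.mem_nhdsWithin_iff] at hev
    obtain ⟨δ, hδ, h⟩ := hev
    refine ⟨δ, hδ, fun y hy hy2 => h ⟨?_, hy⟩⟩
    simpa [Metric.mem_ball, Real.dist_eq] using hy2
  set δ : ℝ := δ₀ / 2 with hδ_def
  have hδpos : 0 < δ := by positivity
  have hδf : ∀ y ∈ Set.Icc (0:ℝ) δ, c < deriv f y := by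
    intro y hy
    exact hδball y hy.1 (by rw [abs_of_nonneg hy.1]; have := hy.2; simp only [hδ_def] at this ⊢; linarith)
  -- linear lower bound for f on [0, δ]
  have hlin : ∀ y ∈ Set.Icc (0:ℝ) δ, c * y ≤ f y := by
    intro y hy
    rcases eq_or_lt_of_le hy.1 with h0 | h0
    · rw [← h0, hf0]; simp
    · obtain ⟨ξ, hξ, hslope⟩ := exists_deriv_eq_slope f h0
        (fun z hz => (hdiff z (Set.mem_Ici.2 hz.1)).continuousAt.continuousWithinAt)
        (fun z hz => (hdiff z (Set.mem_Ici.2 hz.1.le)).differentiableWithinAt)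
      have hξδ : ξ ∈ Set.Icc (0:ℝ) δ := ⟨hξ.1.le, hξ.2.le.trans hy.2⟩
      have := hδf ξ hξδ
      rw [hslope, hf0, sub_zero, sub_zero] at this
      rw [lt_div_iff₀ h0] at this
      linarith
  -- choose ε
  refine ⟨δ * Real.exp (-(r * T)), by positivity, ?_⟩
  intro x₀ hx₀ x hxc hxpos hday hnight hx0
  have hx₀pos : 0 < x₀ := hx₀.1
  have hx₀δ : x₀ < δ := by
    have h1 : Real.exp (-(r * T)) < 1 := by
      rw [Real.exp_lt_one_iff]; nlinarith
    have := hx₀.2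
    nlinarith
  -- night phase: x T ≥ x Tb · e^{-r(T-Tb)}
  have hnight_bound : x Tb * Real.exp (-r * (T - Tb)) ≤ x T :=
    exp_grow (le_of_lt hT)
      (hxc.mono (Set.Icc_subset_Icc hTb.le le_rfl))
      hnight
      (fun t ht => by ring_nf; exact le_rfl)
  -- day phase key: x Tb ≥ min(δ·1, x₀ e^{(c-r)Tb}) case split
  by_cases hA : ∀ t ∈ Set.Ioo (0:ℝ) Tb, x t ≤ δ
  · -- case A : bounded by δ throughout the day
    have hday_bound : x 0 * Real.exp ((c - r) * (Tb - 0)) ≤ x Tb := by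
      apply exp_grow hTb.le (hxc.mono (Set.Icc_subset_Icc le_rfl hT.le)) hday
      intro t ht
      have hxt : x t ∈ Set.Icc (0:ℝ) δ :=
        ⟨(hxpos t ⟨ht.1.le, ht.2.le.trans hT.le⟩).le, hA t ht⟩
      have := hlin (x t) hxt
      nlinarith
    rw [hx0, sub_zero] at hday_bound
    have key : x₀ * (Real.exp ((c - r) * Tb) * Real.exp (-r * (T - Tb))) ≤ x T := by
      have := mul_le_mul_of_nonneg_right hday_bound (Real.exp_pos (-r * (T - Tb))).le
      calc x₀ * (Real.exp ((c - r) * Tb) * Real.exp (-r * (T - Tb)))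
          = x₀ * Real.exp ((c - r) * Tb) * Real.exp (-r * (T - Tb)) := by ring
        _ ≤ x Tb * Real.exp (-r * (T - Tb)) := this
        _ ≤ x T := hnight_bound
    have hexp : 1 < Real.exp ((c - r) * Tb) * Real.exp (-r * (T - Tb)) := by
      rw [← Real.exp_add, show (c - r) * Tb + -r * (T - Tb) = c * Tb - r * T by ring]
      rw [Real.one_lt_exp_iff]
      linarith
    nlinarith
  · -- case B : x exceeds δ at some point during the day; then x Tb ≥ δ
    push_neg at hA
    obtain ⟨t₀, ht₀, ht₀δ⟩ := hA
    have hTbδ : δ ≤ x Tb := by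
      by_contra hTbδ
      push_neg at hTbδ
      set K : Set ℝ := {t ∈ Set.Icc 0 Tb | δ ≤ x t} with hK_def
      have hKne : K.Nonempty := ⟨t₀, ⟨ht₀.1.le, ht₀.2.le⟩, ht₀δ.le⟩
      have hKcomp : IsCompact K := by
        have hcl : IsClosed K := by
          have : K = Set.Icc 0 Tb ∩ x ⁻¹' Set.Ici δ := by
            ext t; simp [hK_def, Set.mem_preimage, and_comm]
          rw [this]
          exact (hxc.mono (Set.Icc_subset_Icc le_rfl hT.le)).preimage_isClosed_of_isClosed
            isClosed_Icc isClosed_Ici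
        exact (isCompact_Icc (a := (0:ℝ)) (b := Tb)).of_isClosed_subset hcl
          (fun t ht => ht.1)
      set t₃ : ℝ := sSup K with ht₃_def
      have ht₃K : t₃ ∈ K := hKcomp.sSup_mem hKne
      have ht₃Tb : t₃ < Tb := by
        rcases lt_or_eq_of_le ht₃K.1.2 with h | h
        · exact h
        · exfalso; rw [h] at ht₃K; exact absurd ht₃K.2 (not_le.2 hTbδ)
      have hustay : ∀ t ∈ Set.Ioo t₃ Tb, x t ≤ δ := by
        intro t ht
        by_contra h
        push_neg at h
        have htK : t ∈ K := ⟨⟨ht₃K.1.1.trans ht.1.le, ht.2.le⟩, h.le⟩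
        have := le_csSup hKcomp.bddAbove htK
        exact absurd this (not_le.2 ht.1)
      have hgrow2 : x t₃ * Real.exp ((c - r) * (Tb - t₃)) ≤ x Tb := by
        apply exp_grow ht₃Tb.le
          (hxc.mono (Set.Icc_subset_Icc ht₃K.1.1 hT.le))
        · intro t ht
          exact hday t ⟨lt_of_le_of_lt ht₃K.1.1 ht.1, ht.2⟩
        · intro t ht
          have hxt : x t ∈ Set.Icc (0:ℝ) δ :=
            ⟨(hxpos t ⟨(ht₃K.1.1.trans ht.1.le), ht.2.le.trans hT.le⟩).le, hustay t ht⟩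
          have := hlin (x t) hxt
          nlinarith
      have hexp1 : 1 ≤ Real.exp ((c - r) * (Tb - t₃)) := by
        rw [Real.one_le_exp_iff]
        have : 0 ≤ Tb - t₃ := by linarith
        nlinarith
      have : δ ≤ x Tb := by
        calc δ = δ * 1 := by ring
          _ ≤ x t₃ * Real.exp ((c - r) * (Tb - t₃)) :=
            mul_le_mul ht₃K.2 hexp1 zero_le_one
              (hxpos t₃ ⟨ht₃K.1.1, ht₃K.1.2.trans hT.le⟩).le
          _ ≤ x Tb := hgrow2
      exact absurd this (not_le.2 hTbδ)
    -- conclude: x T ≥ δ e^{-r(T-Tb)} > δ e^{-rT} > x₀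
    have h1 : δ * Real.exp (-r * (T - Tb)) ≤ x T := by
      calc δ * Real.exp (-r * (T - Tb)) ≤ x Tb * Real.exp (-r * (T - Tb)) :=
            mul_le_mul_of_nonneg_right hTbδ (Real.exp_pos _).le
        _ ≤ x T := hnight_bound
    have h2 : Real.exp (-(r * T)) < Real.exp (-r * (T - Tb)) := by
      apply Real.exp_lt_exp.2
      nlinarith
    have := hx₀.2
    nlinarith [Real.exp_pos (-r * (T - Tb)), hδpos]
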